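/- Let d ≥ 2, n ≥ 2, and let T ∈ (ℂ^d)^{⊗n} be a tensor of the form T = Σ_{j₁+⋯+jₙ < d} t_{j₁⋯jₙ} |j₁⟩⊗⋯⊗|jₙ⟩, i.e., all coefficients of T in the standard product basis vanish on multi-indices (j₁,…,jₙ) with j₁+⋯+jₙ ≥ d. If the coefficient of |0⟩^{⊗(n−i−2)}⊗|j⟩⊗|0⟩^{⊗i}⊗|d−j−1⟩ is nonzero for all 0 ≤ i ≤ n−2 and 0 ≤ j ≤ d−1, then T is a persistent tensor. -/

import Mathlib

namespace QIT

noncomputable section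

/-- The coordinate description of the rank-one (simple) tensor
`v 1 ⊗ ⋯ ⊗ v n` with local factors `v i : ℂ^{α i}`.  Throughout, a tensor in
`ℂ^{α 1} ⊗ ⋯ ⊗ ℂ^{α n}` (each local space `ℂ^{α i}` being the space `α i → ℂ`
with its standard basis) is identified with its coefficient array, a function
`(∀ i, α i) → ℂ` on multi-indices. -/
def prodTensor {ι : Type} [Fintype ι] {α : ι → Type} (v : ∀ i, α i → ℂ) :
    (∀ i, α i) → ℂ :=
  fun j => ∏ i, v i (j i)

/-- `T` has tensor rank at most `r`: it is a sum of `r` simple tensors. -/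
def HasRankLE {ι : Type} [Fintype ι] {α : ι → Type} (T : (∀ i, α i) → ℂ) (r : ℕ) : Prop :=
  ∃ v : Fin r → ∀ i, α i → ℂ, T = ∑ p, prodTensor (v p)

/-- The tensor rank of `T`. -/
def tensorRank {ι : Type} [Fintype ι] {α : ι → Type} (T : (∀ i, α i) → ℂ) : ℕ :=
  sInf {r | HasRankLE T r}

/-- The border rank of `T`: the smallest `r` such that `T` is a limit of tensors
of rank at most `r`. -/
def borderRank {ι : Type} [Fintype ι] {α : ι → Type} (T : (∀ i, α i) → ℂ) : ℕ :=
  sInf {r | T ∈ closure {S : (∀ i, α i) → ℂ | HasRankLE S r}}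

/-- The slice of `T` in the `i`-th factor determined by the multi-index `m`
(the value of `m` at `i` is irrelevant). -/
def sliceAt {ι : Type} [DecidableEq ι] {α : ι → Type} (T : (∀ i, α i) → ℂ) (i : ι)
    (m : ∀ j, α j) : α i → ℂ :=
  fun k => T (Function.update m i k)

/-- `T ∈ V' ⊗ (⊗_{j ≠ i} V_j)` in the `i`-th factor: all `i`-th slices of `T`
lie in the subspace `V'`. -/
def FactorIn {ι : Type} [DecidableEq ι] {α : ι → Type} (T : (∀ i, α i) → ℂ) (i : ι)
    (V' : Submodule ℂ (α i → ℂ)) : Prop :=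
  ∀ m : ∀ j, α j, sliceAt T i m ∈ V'

/-- `T` is concise in the `i`-th factor: `T ∉ V' ⊗ (⊗_{j ≠ i} V_j)` for every
proper subspace `V' ⊊ V_i`. -/
def Concise {ι : Type} [DecidableEq ι] {α : ι → Type} (T : (∀ i, α i) → ℂ) (i : ι) : Prop :=
  ∀ V' : Submodule ℂ (α i → ℂ), FactorIn T i V' → V' = ⊤

/-- Contraction `⟨f|T` of the first factor of `T` with a covector `f`. -/
def contractFirst {n : ℕ} {α : Fin (n + 1) → Type} (f : (α 0 → ℂ) →ₗ[ℂ] ℂ)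
    (T : (∀ i, α i) → ℂ) : (∀ i : Fin n, α i.succ) → ℂ :=
  fun m => f (fun k => T (Fin.cons k m))

/-- Persistent tensors, defined inductively: a bipartite tensor is persistent
iff it is `1`-concise; an `n`-partite tensor (`n > 2`) is persistent iff it is
`1`-concise and there is a proper subspace `S ⊊ V₁^∨` such that `⟨f|T` is
persistent whenever `f ∉ S`. -/
def Persistent : {n : ℕ} → {α : Fin n → Type} → ((∀ i, α i) → ℂ) → Prop
  | 0, _, _ => False
  | 1, _, _ => False
  | 2, _, T => Concise T 0
  | (n + 3), α, T =>
      Concise T 0 ∧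
      ∃ S : Submodule ℂ ((α 0 → ℂ) →ₗ[ℂ] ℂ), S ≠ ⊤ ∧
        ∀ f : (α 0 → ℂ) →ₗ[ℂ] ℂ, f ∉ S → Persistent (contractFirst f T)

/-- Apply the linear maps with matrices `A i` to the factors of `T`
(the coordinate form of `(A 1 ⊗ ⋯ ⊗ A n) T`). -/
def applyLin {ι : Type} [Fintype ι] [DecidableEq ι] {α β : ι → Type} [∀ i, Fintype (α i)]
    (A : ∀ i, β i → α i → ℂ) (T : (∀ i, α i) → ℂ) : (∀ i, β i) → ℂ :=
  fun j => ∑ m : ∀ i, α i, (∏ i, A i (j i) (m i)) * T m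

/-- `T` can be transformed into `S` via SLOCC. -/
def SLOCCto {ι : Type} [Fintype ι] [DecidableEq ι] {α β : ι → Type} [∀ i, Fintype (α i)]
    (T : (∀ i, α i) → ℂ) (S : (∀ i, β i) → ℂ) : Prop :=
  ∃ A : ∀ i, β i → α i → ℂ, applyLin A T = S

/-- `T` degenerates into `S` via SLOCC: there are local maps `A i (ε)` with
entries polynomial in `ε` and an approximation degree `e` with
`lim_{ε → 0} ε⁻ᵉ (A 1 (ε) ⊗ ⋯ ⊗ A n (ε)) T = S`. -/
def Degenerates {ι : Type} [Fintype ι] [DecidableEq ι] {α β : ι → Type} [∀ i, Fintype (α i)]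
    (T : (∀ i, α i) → ℂ) (S : (∀ i, β i) → ℂ) : Prop :=
  ∃ (A : ∀ i, β i → α i → Polynomial ℂ) (e : ℕ),
    Filter.Tendsto
      (fun ε : ℂ => (ε ^ e)⁻¹ • applyLin (fun i r c => (A i r c).eval ε) T)
      (nhdsWithin 0 {0}ᶜ) (nhds S)

/-- The rank of the flattening of `T` across the bipartition `I | Iᶜ`. -/
def flatRank {ι : Type} [Fintype ι] [DecidableEq ι] {α : ι → Type}
    [∀ i, Fintype (α i)] (T : (∀ i, α i) → ℂ) (I : Finset ι) : ℕ :=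
  Matrix.rank (Matrix.of fun (a : ∀ i : {x // x ∈ I}, α i.1) (b : ∀ i : {x // x ∉ I}, α i.1) =>
    T fun i => if h : i ∈ I then a ⟨i, h⟩ else b ⟨i, h⟩)

/-- The direct sum `T ⊕ S` of two `n`-partite tensors, a tensor with `i`-th
local space `U_i ⊕ V_i`. -/
def directSum {ι : Type} [Fintype ι] {α β : ι → Type}
    (T : (∀ i, α i) → ℂ) (S : (∀ i, β i) → ℂ) : (∀ i, α i ⊕ β i) → ℂ :=
  fun j =>
    if h : ∀ i, (j i).isLeft then T (fun i => (j i).getLeft (h i))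
    else if h' : ∀ i, (j i).isRight then S (fun i => (j i).getRight (h' i))
    else 0

/-- The Kronecker product `T ⊠ S` of two `n`-partite tensors, an `n`-partite
tensor with `i`-th local space `U_i ⊗ V_i`. -/
def kron {ι : Type} {α β : ι → Type} (T : (∀ i, α i) → ℂ) (S : (∀ i, β i) → ℂ) :
    (∀ i, α i × β i) → ℂ :=
  fun j => T (fun i => (j i).1) * S (fun i => (j i).2)

/-- The outer (tensor) product `T ⊗ S` of an `n`-partite and an `m`-partite
tensor, regarded as an `(n+m)`-partite tensor. -/
def outer {ι κ : Type} {α : ι → Type} {β : κ → Type}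
    (T : (∀ i, α i) → ℂ) (S : (∀ k, β k) → ℂ) :
    (∀ x : ι ⊕ κ, Sum.elim α β x) → ℂ :=
  fun j => T (fun i => j (Sum.inl i)) * S (fun k => j (Sum.inr k))

/-- The `m`-fold Kronecker power `T^{⊠ m}` of an `n`-partite tensor with all
local spaces `ℂ^d`: an `n`-partite tensor with local spaces `(ℂ^d)^{⊗ m}`. -/
def kpow (d n : ℕ) (T : (Fin n → Fin d) → ℂ) (m : ℕ) :
    (Fin n → (Fin m → Fin d)) → ℂ :=
  fun j => ∏ t : Fin m, T (fun i => j i t)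

/-- The `n`-qubit W state `W_n = Σ_{i} |0⟩^{⊗(n-i-1)} ⊗ |1⟩ ⊗ |0⟩^{⊗ i}`:
its coefficient on a multi-index is `1` iff exactly one entry is `1`. -/
def Wstate (n : ℕ) : (Fin n → Fin 2) → ℂ :=
  fun m => if (∑ i, (m i : ℕ)) = 1 then 1 else 0

/-- The `n`-qudit GHZ state `G(d,n) = Σ_{j=0}^{d-1} |j⟩^{⊗ n}`. -/
def Gstate (d n : ℕ) : (Fin n → Fin d) → ℂ :=
  fun m => if ∃ j : Fin d, ∀ i, m i = j then 1 else 0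

/-- The `n`-qudit L state `L(d,n) = Σ_{j₁+⋯+jₙ = d-1} |j₁ ⋯ jₙ⟩`. -/
def Lstate (d n : ℕ) : (Fin n → Fin d) → ℂ :=
  fun m => if (∑ i, (m i : ℕ)) = d - 1 then 1 else 0

/-- The `n`-qudit M state
`M(d,n) = Σᵢ |0⟩^{⊗(n-i-1)} |d-1⟩ |0⟩^{⊗ i}
  + Σ_{i+k+l=n-2} Σ_{j=1}^{d-2} |0⟩^{⊗i} |j⟩ |0⟩^{⊗k} |d-j-1⟩ |0⟩^{⊗l}`:
its coefficient on a multi-index is `1` iff the entries sum to `d-1` and at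
most two entries are nonzero. -/
def Mstate (d n : ℕ) : (Fin n → Fin d) → ℂ :=
  fun m =>
    if (∑ i, (m i : ℕ)) = d - 1 ∧
        (Finset.univ.filter fun i => (m i : ℕ) ≠ 0).card ≤ 2 then 1 else 0

/-- The `n`-qudit N state
`N(d,n) = |0⟩^{⊗(n-1)} |d-1⟩ + Σ_{i=0}^{n-2} Σ_{j=1}^{d-1} |0⟩^{⊗(n-i-2)} |j⟩ |0⟩^{⊗i} |d-j-1⟩`:
its coefficient on a multi-index is `1` iff the entries sum to `d-1` and at
most one of the first `n-1` entries is nonzero. -/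
def Nstate (d n : ℕ) : (Fin n → Fin d) → ℂ :=
  fun m =>
    if (∑ i, (m i : ℕ)) = d - 1 ∧
        (Finset.univ.filter fun i : Fin n => (i : ℕ) + 1 < n ∧ (m i : ℕ) ≠ 0).card ≤ 1
    then 1 else 0

/-- Apply a linear endomorphism `π` of the `i`-th local space to the `i`-th
factor of `T`, i.e. `(id^{⊗(i-1)} ⊗ π ⊗ id^{⊗(n-i)}) T`. -/
def applyAtFactor {ι : Type} [DecidableEq ι] {α : ι → Type}
    (T : (∀ i, α i) → ℂ) (i : ι) (π : (α i → ℂ) →ₗ[ℂ] (α i → ℂ)) :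
    (∀ j, α j) → ℂ :=
  fun j => π (sliceAt T i j) (j i)

end

section AuxLemmas

private lemma mem_of_single (d : ℕ) (V' : Submodule ℂ (Fin d → ℂ))
    (h : ∀ j : Fin d, (Pi.single j 1 : Fin d → ℂ) ∈ V') : V' = ⊤ := by
  rw [eq_top_iff]
  rintro x -
  have hx : x = ∑ i, x i • (Pi.single i 1 : Fin d → ℂ) := by
    funext l
    rw [Finset.sum_apply]
    simp only [Pi.smul_apply, Pi.single_apply, smul_eq_mul, mul_ite, mul_one, mul_zero]
    rw [Finset.sum_ite_eq Finset.univ l x]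
    simp
  rw [hx]
  exact Submodule.sum_mem _ fun i _ => Submodule.smul_mem _ _ (h i)

private lemma triangular_top (d : ℕ) (V' : Submodule ℂ (Fin d → ℂ))
    (v : Fin d → Fin d → ℂ) (hmem : ∀ j, v j ∈ V')
    (hdiag : ∀ j, v j j ≠ 0) (htri : ∀ j k : Fin d, (j : ℕ) < (k : ℕ) → v j k = 0) :
    V' = ⊤ := by
  apply mem_of_single
  suffices h : ∀ Nb : ℕ, ∀ j : Fin d, (j : ℕ) < Nb → (Pi.single j 1 : Fin d → ℂ) ∈ V' from
    fun j => h d j j.isLt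
  intro Nb
  induction Nb with
  | zero => intro j hj; omega
  | succ Nb ih =>
    intro j hj
    rcases lt_or_ge (j : ℕ) Nb with h | h
    · exact ih j h
    have hw : v j - ∑ k ∈ Finset.univ.filter (fun k : Fin d => (k : ℕ) < (j : ℕ)),
        v j k • (Pi.single k 1 : Fin d → ℂ) ∈ V' := by
      refine Submodule.sub_mem _ (hmem j) (Submodule.sum_mem _ fun k hk => ?_)
      refine Submodule.smul_mem _ _ (ih k ?_)
      have := (Finset.mem_filter.mp hk).2
      omega
    have heq : (Pi.single j 1 : Fin d → ℂ) = (v j j)⁻¹ •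
        (v j - ∑ k ∈ Finset.univ.filter (fun k : Fin d => (k : ℕ) < (j : ℕ)),
          v j k • (Pi.single k 1 : Fin d → ℂ)) := by
      funext l
      simp only [Pi.smul_apply, Pi.sub_apply, Finset.sum_apply, Pi.single_apply,
        smul_eq_mul, mul_ite, mul_one, mul_zero]
      rw [Finset.sum_ite_eq _ l (v j)]
      by_cases hlj : l = j
      · subst hlj
        rw [if_pos rfl, if_neg (by simp)]
        rw [sub_zero, inv_mul_cancel₀ (hdiag l)]
      · rw [if_neg hlj]
        by_cases hlt : (l : ℕ) < (j : ℕ)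
        · rw [if_pos (by simp only [Finset.mem_filter, Finset.mem_univ, true_and]; exact hlt), sub_self, mul_zero]
        · have hgt : (j : ℕ) < (l : ℕ) := by
            rcases lt_or_ge (j : ℕ) (l : ℕ) with h' | h'
            · exact h'
            · exact absurd (Fin.ext (by omega)) hlj
          rw [if_neg (by simp only [Finset.mem_filter, Finset.mem_univ, true_and]; exact hlt), htri j l hgt, sub_zero, mul_zero]
    rw [heq]
    exact Submodule.smul_mem _ _ hw

private lemma concise_aux (d M : ℕ) (hd : 2 ≤ d)
    (T : (Fin (M + 2) → Fin d) → ℂ)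
    (hvanish : ∀ m : Fin (M + 2) → Fin d, d ≤ ∑ i, (m i : ℕ) → T m = 0)
    (hnz : ∀ (i j : ℕ) (_ : i ≤ M + 2 - 2) (_ : j ≤ d - 1),
      T (fun k : Fin (M + 2) =>
          if (k : ℕ) = M + 2 - i - 2 then ⟨j, Nat.lt_of_le_of_lt ‹j ≤ d - 1› (Nat.sub_lt (Nat.lt_of_lt_of_le (by decide : 0 < 2) hd) Nat.one_pos)⟩
          else if (k : ℕ) = M + 2 - 1 then ⟨d - 1 - j, Nat.lt_of_le_of_lt (Nat.sub_le _ _) (Nat.sub_lt (Nat.lt_of_lt_of_le (by decide : 0 < 2) hd) Nat.one_pos)⟩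
          else ⟨0, Nat.lt_of_lt_of_le (by decide : 0 < 2) hd⟩) ≠ 0) :
    Concise T 0 := by
  intro V' hV'
  have hjd : ∀ j : Fin d, (j : ℕ) ≤ d - 1 := fun j => by have := j.isLt; omega
  set mj : Fin d → Fin (M + 2) → Fin d := fun j k =>
      if (k : ℕ) = M + 2 - (M : ℕ) - 2 then ⟨(j : ℕ), by omega⟩
      else if (k : ℕ) = M + 2 - 1 then ⟨d - 1 - (j : ℕ), by omega⟩
      else ⟨0, by omega⟩ with hmj
  have h0 : ∀ j : Fin d, mj j 0 = j := by
    intro j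
    rw [hmj]
    simp only
    rw [if_pos (by simp)]
  apply triangular_top d V' (fun j => sliceAt T 0 (mj j))
  · exact fun j => hV' (mj j)
  · intro j
    show T (Function.update (mj j) 0 j) ≠ 0
    have hupd := Function.update_eq_self (0 : Fin (M + 2)) (mj j)
    rw [h0 j] at hupd
    rw [hupd]
    exact hnz M (j : ℕ) (by omega) (hjd j)
  · intro j k hjk
    show T (Function.update (mj j) 0 k) = 0
    apply hvanish
    have hne : (0 : Fin (M + 2)) ≠ ⟨M + 1, by omega⟩ := by
      simp [Fin.ext_iff]
    have hA : Function.update (mj j) 0 k 0 = k := Function.update_self _ _ _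
    have hB : Function.update (mj j) 0 k ⟨M + 1, by omega⟩ =
        (⟨d - 1 - (j : ℕ), by omega⟩ : Fin d) := by
      rw [Function.update_of_ne (Ne.symm hne), hmj]
      simp only
      rw [if_neg (by omega), if_pos (by omega)]
    have hpair : ∑ i ∈ ({(0 : Fin (M + 2)), ⟨M + 1, by omega⟩} : Finset (Fin (M + 2))),
        ((Function.update (mj j) 0 k i : Fin d) : ℕ) =
        (k : ℕ) + (d - 1 - (j : ℕ)) := by
      rw [Finset.sum_pair hne, hA, hB]
    have hle : ∑ i ∈ ({(0 : Fin (M + 2)), ⟨M + 1, by omega⟩} : Finset (Fin (M + 2))),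
        ((Function.update (mj j) 0 k i : Fin d) : ℕ) ≤
        ∑ i, ((Function.update (mj j) 0 k i : Fin d) : ℕ) :=
      Finset.sum_le_sum_of_subset (Finset.subset_univ _)
    have hj := j.isLt
    have hk := k.isLt
    omega

private lemma persistent_aux (d : ℕ) (hd : 2 ≤ d) :
    ∀ M, ∀ T : (Fin (M + 2) → Fin d) → ℂ,
    (∀ m : Fin (M + 2) → Fin d, d ≤ ∑ i, (m i : ℕ) → T m = 0) →
    (∀ (i j : ℕ) (_ : i ≤ M + 2 - 2) (_ : j ≤ d - 1),
      T (fun k : Fin (M + 2) =>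
          if (k : ℕ) = M + 2 - i - 2 then ⟨j, Nat.lt_of_le_of_lt ‹j ≤ d - 1› (Nat.sub_lt (Nat.lt_of_lt_of_le (by decide : 0 < 2) hd) Nat.one_pos)⟩
          else if (k : ℕ) = M + 2 - 1 then ⟨d - 1 - j, Nat.lt_of_le_of_lt (Nat.sub_le _ _) (Nat.sub_lt (Nat.lt_of_lt_of_le (by decide : 0 < 2) hd) Nat.one_pos)⟩
          else ⟨0, Nat.lt_of_lt_of_le (by decide : 0 < 2) hd⟩) ≠ 0) →
    Persistent T := by
  intro M
  induction M with
  | zero =>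
    intro T hvanish hnz
    show Concise T 0
    exact concise_aux d 0 hd T hvanish hnz
  | succ M ih =>
    intro T hvanish hnz
    show Concise T 0 ∧ ∃ S : Submodule ℂ ((Fin d → ℂ) →ₗ[ℂ] ℂ), S ≠ ⊤ ∧
      ∀ f : (Fin d → ℂ) →ₗ[ℂ] ℂ, f ∉ S → Persistent (contractFirst f T)
    refine ⟨concise_aux d (M + 1) hd T hvanish hnz, ?_⟩
    set z : Fin d := ⟨0, by omega⟩ with hz
    set e0 : Fin d → ℂ := fun x => if z = x then 1 else 0 with he0
    set ev : ((Fin d → ℂ) →ₗ[ℂ] ℂ) →ₗ[ℂ] ℂ :=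
      { toFun := fun f => f e0,
        map_add' := fun f g => rfl,
        map_smul' := fun c f => rfl } with hev
    refine ⟨LinearMap.ker ev, ?_, ?_⟩
    · intro htop
      have hmem : (LinearMap.proj z : (Fin d → ℂ) →ₗ[ℂ] ℂ) ∈ LinearMap.ker ev := by
        rw [htop]; exact Submodule.mem_top
      have h1 : e0 z = 0 := hmem
      have h2 : e0 z = 1 := by rw [he0]; simp
      rw [h2] at h1
      exact one_ne_zero h1
    · intro f hf
      have hf0 : f e0 ≠ 0 := by
        intro h
        exact hf (LinearMap.mem_ker.mpr h)
      have hT' : ∀ m : Fin (M + 2) → Fin d,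
          contractFirst f T m =
            ∑ k : Fin d, T (Fin.cons k m) * f (fun x => if k = x then 1 else 0) := by
        intro m
        show f (fun k => T (Fin.cons k m)) = _
        rw [LinearMap.pi_apply_eq_sum_univ f (fun k => T (Fin.cons k m))]
        simp [smul_eq_mul]
      have hsum_cons : ∀ (k : Fin d) (m : Fin (M + 2) → Fin d),
          ∑ i : Fin (M + 3), ((Fin.cons k m : ∀ _ : Fin (M + 3), Fin d) i : ℕ) =
            (k : ℕ) + ∑ i, (m i : ℕ) := by
        intro k m
        rw [Fin.sum_univ_succ]
        simp [Fin.cons_succ]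
      refine ih (contractFirst f T) ?_ ?_
      · intro m hm
        rw [hT' m]
        apply Finset.sum_eq_zero
        intro k _
        rw [hvanish _ (by rw [hsum_cons]; omega), zero_mul]
      · intro i j hi hj
        set b : Fin (M + 2) → Fin d := fun k =>
          if (k : ℕ) = M + 2 - i - 2 then ⟨j, by omega⟩
          else if (k : ℕ) = M + 2 - 1 then ⟨d - 1 - j, by omega⟩
          else ⟨0, by omega⟩ with hb
        have hsumb : d - 1 ≤ ∑ l : Fin (M + 2), ((b l : Fin d) : ℕ) := by
          have hne : (⟨M - i, by omega⟩ : Fin (M + 2)) ≠ ⟨M + 1, by omega⟩ := by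
            simp only [Ne, Fin.ext_iff]; omega
          have hp : ∑ l ∈ ({(⟨M - i, by omega⟩ : Fin (M + 2)), ⟨M + 1, by omega⟩} :
              Finset (Fin (M + 2))), ((b l : Fin d) : ℕ) = j + (d - 1 - j) := by
            rw [Finset.sum_pair hne]
            congr 1
            · rw [hb]; simp only
              rw [if_pos (by omega)]
            · rw [hb]; simp only
              rw [if_neg (by omega), if_pos (by omega)]
          have hle : ∑ l ∈ ({(⟨M - i, by omega⟩ : Fin (M + 2)), ⟨M + 1, by omega⟩} :
              Finset (Fin (M + 2))), ((b l : Fin d) : ℕ) ≤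
              ∑ l : Fin (M + 2), ((b l : Fin d) : ℕ) :=
            Finset.sum_le_sum_of_subset (Finset.subset_univ _)
          omega
        rw [hT' b, Finset.sum_eq_single z]
        · apply mul_ne_zero _ hf0
          have hp := hnz i j (by omega) hj
          have hcons : (Fin.cons z b : ∀ _ : Fin (M + 3), Fin d) =
              (fun k : Fin (M + 3) =>
                if (k : ℕ) = M + 1 + 2 - i - 2 then ⟨j, by omega⟩
                else if (k : ℕ) = M + 1 + 2 - 1 then ⟨d - 1 - j, by omega⟩
                else ⟨0, by omega⟩) := by
            funext l
            induction l using Fin.cases with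
            | zero =>
              rw [Fin.cons_zero]
              have h0v : ((0 : Fin (M + 3)) : ℕ) = 0 := rfl
              rw [if_neg (by omega), if_neg (by omega)]
            | succ k =>
              rw [Fin.cons_succ, hb]
              simp only [Fin.val_succ]
              have hkv := k.isLt
              split_ifs <;> first | rfl | omega
          rw [hcons]
          exact hp
        · intro k _ hk
          have hkv : 1 ≤ (k : ℕ) := by
            rcases Nat.eq_zero_or_pos (k : ℕ) with h | h
            · exact absurd (Fin.ext (by rw [h, hz])) hk
            · exact h
          rw [hvanish _ (by rw [hsum_cons]; omega), zero_mul]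
        · intro h
          exact absurd (Finset.mem_univ z) h

end AuxLemmas

/-- a tensor `T ∈ (ℂ^d)^{⊗n}` supported on multi-indices with
entry sum `< d`, whose coefficients on all the basis vectors
`|0⟩^{⊗(n-i-2)} |j⟩ |0⟩^{⊗i} |d-j-1⟩` are nonzero, is persistent. -/
theorem persistent_of_pyramidal_support
    (d n : ℕ) (hd : 2 ≤ d) (hn : 2 ≤ n)
    (T : (Fin n → Fin d) → ℂ)
    (hvanish : ∀ m : Fin n → Fin d, d ≤ ∑ i, (m i : ℕ) → T m = 0)
    (hnz : ∀ (i j : ℕ) (hi : i ≤ n - 2) (hj : j ≤ d - 1),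
      T (fun k : Fin n =>
          if (k : ℕ) = n - i - 2 then ⟨j, by omega⟩
          else if (k : ℕ) = n - 1 then ⟨d - 1 - j, by omega⟩
          else ⟨0, by omega⟩) ≠ 0) :
    Persistent T := by
  obtain ⟨M, rfl⟩ : ∃ M, n = M + 2 := ⟨n - 2, by omega⟩
  exact persistent_aux d hd M T hvanish hnz

end QIT
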